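/- If D is an acyclic directed multigraph on the vertex set of a graph G (with each edge of D corresponding to an edge of G) and p is a pebble distribution on G, then some ordering of the edges of D forms a valid sequence of pebbling moves if and only if every vertex v satisfies p(v) + indeg_D(v) - 2·outdeg_D(v) ≥ 0. -/

import Mathlib

variable {V : Type*} [DecidableEq V]

/-- Result of a pebbling move `u → v`: remove two pebbles from `u`, add one to `v`. -/
def applyMove (p : V → ℕ) (u v : V) (x : V) : ℕ :=
  (if x = u then p x - 2 else p x) + (if x = v then 1 else 0)

/-- A list of moves is a valid sequence of pebbling moves from `p` in `G`. -/
def IsValidSeq (G : SimpleGraph V) : (V → ℕ) → List (V × V) → Prop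
  | _, [] => True
  | p, m :: rest => G.Adj m.1 m.2 ∧ 2 ≤ p m.1 ∧ IsValidSeq G (applyMove p m.1 m.2) rest

/-- The distribution after executing a sequence of pebbling moves. -/
def applySeq (p : V → ℕ) : List (V × V) → V → ℕ
  | [] => p
  | m :: rest => applySeq (applyMove p m.1 m.2) rest

/-- Indegree of a vertex in a directed multigraph (multiset of directed edges). -/
def indeg (D : Multiset (V × V)) (v : V) : ℕ :=
  Multiset.card (D.filter fun e => e.2 = v)

/-- Outdegree of a vertex in a directed multigraph. -/
def outdeg (D : Multiset (V × V)) (v : V) : ℕ :=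
  Multiset.card (D.filter fun e => e.1 = v)

/-- balance(D,p,v) = p(v) + indeg_D(v) - 2·outdeg_D(v). -/
def balance (D : Multiset (V × V)) (p : V → ℕ) (v : V) : ℤ :=
  (p v : ℤ) + (indeg D v : ℤ) - 2 * (outdeg D v : ℤ)

/-- `D` is orderable under `p`: some ordering of the edge multiset of `D`
is a valid sequence of pebbling moves. -/
def Orderable (G : SimpleGraph V) (D : Multiset (V × V)) (p : V → ℕ) : Prop :=
  ∃ σ : List (V × V), (σ : Multiset (V × V)) = D ∧ IsValidSeq G p σ

/-- A directed multigraph is acyclic if its edge relation admits no directed cycle. -/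
def DAcyclic (D : Multiset (V × V)) : Prop :=
  ∀ v : V, ¬ Relation.TransGen (fun a b => (a, b) ∈ D) v v

/-- The strongly connected component of `a` in the directed multigraph `D`. -/
def SCC (D : Multiset (V × V)) (a : V) : Set V :=
  {b | Relation.ReflTransGen (fun x y => (x, y) ∈ D) a b ∧
       Relation.ReflTransGen (fun x y => (x, y) ∈ D) b a}

-- auxiliary lemmas
set_option linter.unusedSectionVars false

lemma indeg_cons (e : V × V) (D : Multiset (V × V)) (x : V) :
    indeg (e ::ₘ D) x = indeg D x + (if e.2 = x then 1 else 0) := by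
  classical
  simp only [indeg, Multiset.filter_cons]
  split <;> simp [add_comm]

lemma outdeg_cons (e : V × V) (D : Multiset (V × V)) (x : V) :
    outdeg (e ::ₘ D) x = outdeg D x + (if e.1 = x then 1 else 0) := by
  classical
  simp only [outdeg, Multiset.filter_cons]
  split <;> simp [add_comm]

lemma applySeq_eq (G : SimpleGraph V) :
    ∀ (σ : List (V × V)) (p : V → ℕ), IsValidSeq G p σ → ∀ v,
      (applySeq p σ v : ℤ) = balance (σ : Multiset (V × V)) p v := by
  intro σ
  induction σ with
  | nil => intro p _ v; simp [applySeq, balance, indeg, outdeg]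
  | cons m rest ih =>
    intro p hval v
    obtain ⟨hadj, hp2, hrest⟩ := hval
    have hne : m.1 ≠ m.2 := hadj.ne
    have := ih (applyMove p m.1 m.2) hrest v
    simp only [applySeq] at *
    rw [this]
    have hcons : ((m :: rest : List (V × V)) : Multiset (V × V)) = m ::ₘ (rest : Multiset (V × V)) := rfl
    rw [hcons]
    simp only [balance, indeg_cons, outdeg_cons, applyMove]
    have hcast : ∀ x, ((if x = m.1 then p x - 2 else p x) + (if x = m.2 then 1 else 0) : ℤ)
        = (p x : ℤ) - (if m.1 = x then 2 else 0) + (if m.2 = x then 1 else 0) := by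
      intro x
      by_cases h1 : x = m.1 <;> by_cases h2 : x = m.2 <;>
        simp_all [eq_comm, Int.ofNat_sub hp2]
    push_cast
    by_cases h1 : v = m.1 <;> by_cases h2 : v = m.2 <;> simp_all [eq_comm] <;> omega

lemma exists_min_of_rel (r : V → V → Prop) (ht : Transitive r) :
    ∀ S : Finset V, S.Nonempty → (∀ a, ¬ r a a) → ∃ u ∈ S, ∀ b ∈ S, ¬ r b u := by
  classical
  intro S
  induction S using Finset.strongInduction with
  | _ S ih =>
    rintro ⟨a, ha⟩ hi
    by_cases h : ∃ b ∈ S, r b a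
    · obtain ⟨b, hb, hba⟩ := h
      set T := S.filter (fun x => r x a) with hT
      have hTss : T ⊂ S := by
        refine Finset.filter_ssubset.mpr ⟨a, ha, hi a⟩
      obtain ⟨u, huT, humin⟩ := ih T hTss ⟨b, by simp [hT, hb, hba]⟩ hi
      have huS : u ∈ S := (Finset.mem_filter.mp huT).1
      have hua : r u a := (Finset.mem_filter.mp huT).2
      refine ⟨u, huS, fun c hc hcu => ?_⟩
      exact humin c (Finset.mem_filter.mpr ⟨hc, ht hcu hua⟩) hcu
    · exact ⟨a, ha, fun b hb hba => h ⟨b, hb, hba⟩⟩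

lemma exists_source (D : Multiset (V × V)) (hD : D ≠ 0) (hac : DAcyclic D) :
    ∃ u v : V, (u, v) ∈ D ∧ indeg D u = 0 := by
  classical
  set r := fun a b => Relation.TransGen (fun x y : V => (x, y) ∈ D) a b with hr
  have ht : Transitive r := fun a b c => Relation.TransGen.trans
  set S : Finset V := D.toFinset.image Prod.fst with hS
  have hSne : S.Nonempty := by
    obtain ⟨e, he⟩ := Multiset.exists_mem_of_ne_zero hD
    exact ⟨e.1, Finset.mem_image.mpr ⟨e, Multiset.mem_toFinset.mpr he, rfl⟩⟩
  obtain ⟨u, huS, humin⟩ := exists_min_of_rel r ht S hSne hac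
  obtain ⟨e, heD, heu⟩ := Finset.mem_image.mp huS
  have heD' := Multiset.mem_toFinset.mp heD
  refine ⟨u, e.2, by rwa [← heu, Prod.mk.eta], ?_⟩
  by_contra h
  have : ∃ f ∈ D, f.2 = u := by
    by_contra hno
    push_neg at hno
    exact h (by simp [indeg, Multiset.filter_eq_nil.mpr hno])
  obtain ⟨f, hfD, hfu⟩ := this
  have hfS : f.1 ∈ S := Finset.mem_image.mpr ⟨f, Multiset.mem_toFinset.mpr hfD, rfl⟩
  exact humin f.1 hfS (Relation.TransGen.single (by rwa [← hfu, Prod.mk.eta]))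

theorem acyclic_orderability (G : SimpleGraph V) (D : Multiset (V × V)) (p : V → ℕ)
    (hG : ∀ e ∈ D, G.Adj e.1 e.2) (hac : DAcyclic D) :
    Orderable G D p ↔ ∀ v : V, 0 ≤ balance D p v := by
  constructor
  · rintro ⟨σ, hσ, hval⟩ v
    have := applySeq_eq G σ p hval v
    rw [hσ] at this
    rw [← this]
    exact Int.ofNat_nonneg _
  · intro hbal
    induction D using Multiset.strongInductionOn generalizing p with
    | ih D ih =>
      by_cases hD : D = 0
      · exact ⟨[], by simp [hD], trivial⟩
      obtain ⟨u, v, huv, hind⟩ := exists_source D hD hac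
      have hne : u ≠ v := (hG _ huv).ne
      have houtpos : 1 ≤ outdeg D u := by
        have : (u, v) ∈ D.filter (fun e => e.1 = u) := Multiset.mem_filter.mpr ⟨huv, rfl⟩
        exact Multiset.card_pos.mpr (fun h0 => by simp [h0] at this)
      have hpu : 2 ≤ p u := by
        have hb := hbal u
        simp only [balance, hind] at hb
        push_cast at hb
        omega
      set D' := D.erase (u, v) with hD'
      have hcons : (u, v) ::ₘ D' = D := Multiset.cons_erase huv
      set p' := applyMove p u v with hp'
      have hbal' : ∀ x, 0 ≤ balance D' p' x := by
        intro x
        have hb := hbal x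
        rw [← hcons] at hb
        simp only [balance, indeg_cons, outdeg_cons] at hb ⊢
        have hpx : (p' x : ℤ) = (p x : ℤ) - (if u = x then 2 else 0) + (if v = x then 1 else 0) := by
          simp only [hp', applyMove]
          by_cases h1 : x = u
          · subst h1
            simp [hne, Ne.symm hne, Int.ofNat_sub hpu]
          · by_cases h2 : x = v
            · subst h2
              simp [Ne.symm h1, h1]
            · simp [h1, h2, Ne.symm h1, Ne.symm h2]
        rw [hpx]
        push_cast at hb ⊢
        split_ifs at hb ⊢ <;> omega
      obtain ⟨σ', hσ', hval'⟩ := ih D' (Multiset.erase_lt.mpr huv) p'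
        (fun e he => hG e (Multiset.mem_of_mem_erase he))
        (fun w hw => hac w (Relation.TransGen.mono (fun a b h => Multiset.mem_of_mem_erase h) w w hw))
        hbal'
      refine ⟨(u, v) :: σ', ?_, (hG _ huv), hpu, hval'⟩
      show (u, v) ::ₘ (σ' : Multiset (V × V)) = D
      rw [hσ', hcons]
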